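/- Let A be a square matrix over ℕ indexed by a finite set S, and suppose g : S → ℝ≥0 satisfies g(v) = Σ_w A(v,w) g(w) for all v ∈ S. If (A^k)(v,v) ≥ 2 for some v ∈ S and k ≥ 1, then g(v) = 0. -/
import Mathlib


/-- if `A` is a square matrix over `ℕ` indexed by a finite set `S`,
`g : S → ℝ≥0` satisfies `g(v) = Σ_w A(v,w) g(w)` for all `v`, and `(A^k)(v,v) ≥ 2`
for some `v` and some `k ≥ 1`, then `g(v) = 0`. -/
theorem stmt13 (S : Type) [Fintype S] [DecidableEq S] (A : Matrix S S ℕ)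
    (g : S → ℝ) (hg0 : ∀ v, 0 ≤ g v)
    (hfix : ∀ v : S, g v = ∑ w : S, (A v w : ℝ) * g w)
    (v : S) (k : ℕ) (hk : 1 ≤ k) (h2 : 2 ≤ (A ^ k) v v) :
    g v = 0 := by
  have key : ∀ (n : ℕ) (u : S), g u = ∑ w : S, ((A ^ n) u w : ℝ) * g w := by
    intro n
    induction n with
    | zero =>
      intro u
      simp [Matrix.one_apply, Finset.sum_ite_eq]
    | succ n ih =>
      intro u
      rw [pow_succ']
      have : ∀ w, ((A * A ^ n) u w : ℝ) = ∑ x : S, (A u x : ℝ) * ((A ^ n) x w : ℝ) := by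
        intro w
        simp [Matrix.mul_apply]
      calc g u = ∑ x : S, (A u x : ℝ) * g x := hfix u
        _ = ∑ x : S, (A u x : ℝ) * ∑ w : S, ((A ^ n) x w : ℝ) * g w := by
            simp_rw [← ih]
        _ = ∑ x : S, ∑ w : S, (A u x : ℝ) * (((A ^ n) x w : ℝ) * g w) := by
            simp_rw [Finset.mul_sum]
        _ = ∑ w : S, ∑ x : S, (A u x : ℝ) * (((A ^ n) x w : ℝ) * g w) :=
            Finset.sum_comm
        _ = ∑ w : S, ((A * A ^ n) u w : ℝ) * g w := by
            simp_rw [this, Finset.sum_mul, mul_assoc]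
  have hge : 2 * g v ≤ g v := by
    calc 2 * g v ≤ ((A ^ k) v v : ℝ) * g v := by
          apply mul_le_mul_of_nonneg_right _ (hg0 v)
          exact_mod_cast h2
      _ ≤ ∑ w : S, ((A ^ k) v w : ℝ) * g w := by
          apply Finset.single_le_sum (f := fun w => ((A ^ k) v w : ℝ) * g w)
            (fun w _ => mul_nonneg (by positivity) (hg0 w)) (Finset.mem_univ v)
      _ = g v := (key k v).symm
  nlinarith [hg0 v]
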